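/- Existential forgery without a hash function: let p, q be primes with q ∣ p−1, α of order q mod p, y = α^x mod p. For arbitrary k, k', l, l' with l' invertible mod q, set r = α^k·y^{k'} mod p, s = (α^l·y^{l'} mod p) mod q, t = (l')^{-1}·(r + k'·s) mod q, and m = t·l − k·s mod q. If t is invertible mod q, then (r, s, t) satisfies the verification equation ((α^{m·t^{-1}} · y^{r·t^{-1}} · r^{s·t^{-1}}) mod p) mod q = s, where exponents are reduced mod q. -/

import Mathlib

lemma zpow_congr_of_orderOf {p q : ℕ} [Fact p.Prime] [Fact q.Prime]
    (α : ZMod p) (hα : orderOf α = q) (hα0 : α ≠ 0) {a b : ℤ}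
    (h : (a : ZMod q) = (b : ZMod q)) : α ^ a = α ^ b := by
  have hmod : a ≡ b [ZMOD q] := (ZMod.intCast_eq_intCast_iff _ _ _).mp h
  obtain ⟨c, hc⟩ := Int.ModEq.dvd hmod
  have h1 : α ^ (q : ℤ) = 1 := by
    rw [zpow_natCast, ← hα, pow_orderOf_eq_one]
  have : b = a + q * c := by linarith
  rw [this, zpow_add₀ hα0, zpow_mul, h1, one_zpow, mul_one]

theorem existential_forgery_without_hash (p q : ℕ) [Fact p.Prime] [Fact q.Prime]
    (hdvd : q ∣ p - 1) (α : ZMod p) (hα : orderOf α = q)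
    (x : ℤ) (y : ZMod p) (hy : y = α ^ x)
    (k k' l l' : ℤ) (hl' : (l' : ZMod q) ≠ 0)
    (r : ZMod p) (hr : r = α ^ k * y ^ k')
    (s : ZMod q) (hs : s = (((α ^ l * y ^ l' : ZMod p)).val : ZMod q))
    (t : ZMod q) (ht : t = ((l' : ZMod q))⁻¹ * ((r.val : ZMod q) + (k' : ZMod q) * s))
    (ht0 : t ≠ 0)
    (m : ZMod q) (hm : m = t * (l : ZMod q) - (k : ZMod q) * s) :
    (((α ^ (m * t⁻¹).val * y ^ ((r.val : ZMod q) * t⁻¹).val *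
        r ^ (s * t⁻¹).val : ZMod p)).val : ZMod q) = s := by
  have hq0 : q ≠ 0 := (Fact.out : q.Prime).ne_zero
  have hα0 : α ≠ 0 := by
    intro h
    have h1 : α ^ q = 1 := hα ▸ pow_orderOf_eq_one α
    rw [h, zero_pow hq0] at h1
    exact zero_ne_one h1
  have htl' : t * (l' : ZMod q) = (r.val : ZMod q) + (k' : ZMod q) * s := by
    rw [ht]; field_simp
  have hrα : r = α ^ (k + x * k') := by
    rw [hr, hy, ← zpow_mul, ← zpow_add₀ hα0]
  set A := (m * t⁻¹) with hA
  set B := ((r.val : ZMod q) * t⁻¹) with hB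
  set C := (s * t⁻¹) with hC
  have key : (α ^ A.val * y ^ B.val * r ^ C.val : ZMod p) = α ^ l * y ^ l' := by
    rw [hy, hrα, ← zpow_natCast α A.val, ← zpow_natCast (α ^ x) B.val,
      ← zpow_natCast (α ^ (k + x * k')) C.val, ← zpow_mul, ← zpow_mul,
      ← zpow_add₀ hα0, ← zpow_add₀ hα0, ← zpow_mul, ← zpow_add₀ hα0]
    apply zpow_congr_of_orderOf α hα hα0
    push_cast
    simp only [ZMod.natCast_val, ZMod.cast_id]
    rw [hA, hB, hC]
    simp only [ZMod.natCast_val, ZMod.cast_id] at htl'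
    field_simp
    linear_combination hm - (x : ZMod q) * htl' + (x : ZMod q) * (ZMod.natCast_val (R := ZMod q) r)
  rw [key, ← hs]
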